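/- For any code C ⊆ {0,1}^m, the number of codewords satisfies |C| ≤ (m+1)^{CL(C)}. -/

import Mathlib

namespace Paper

/-- A chain of length `ℓ` in a code `C ⊆ {0,1}^m`. -/
def HasChain {m : ℕ} (C : Set (Fin m → Bool)) (ℓ : ℕ) : Prop :=
  ∃ (a : Fin ℓ → Fin m) (c : Fin ℓ → (Fin m → Bool)),
    Function.Injective a ∧ Function.Injective c ∧ (∀ i, c i ∈ C) ∧
    (∀ i, c i (a i) = true) ∧ (∀ i j : Fin ℓ, i < j → c i (a j) = false)

/-- The chain length of a code. -/
noncomputable def CL {m : ℕ} (C : Set (Fin m → Bool)) : ℕ := sSup {ℓ | HasChain C ℓ}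

/-- The support of a code. -/
def Supp {m : ℕ} (C : Set (Fin m → Bool)) : Set (Fin m) := {i | ∃ c ∈ C, c i = true}

/-- Hamming weight. -/
def wt {m : ℕ} (c : Fin m → Bool) : ℕ := (Finset.univ.filter fun i => c i = true).card

open Classical in
/-- Zero out the coordinates outside `S`. -/
noncomputable def mask {m : ℕ} (S : Set (Fin m)) (c : Fin m → Bool) : Fin m → Bool :=
  fun i => if i ∈ S then c i else false

/-- Restriction of a code to a coordinate set `S`. -/
noncomputable def restrict {m : ℕ} (C : Set (Fin m → Bool)) (S : Set (Fin m)) :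
    Set (Fin m → Bool) := mask S '' C

/-- Non-redundancy of a code. -/
noncomputable def NRD {m : ℕ} (C : Set (Fin m → Bool)) : ℕ :=
  sSup {k | ∃ S : Finset (Fin m), S.card = k ∧
    ∀ j ∈ S, ∃ c ∈ C, c j = true ∧ ∀ i ∈ S, i ≠ j → c i = false}

/-- The density `Φ(C)` of a finite code. -/
noncomputable def density {m : ℕ} (C : Finset (Fin m → Bool)) : ℝ :=
  sInf {x : ℝ | ∃ C' : Finset (Fin m → Bool), C' ⊆ C ∧ C'.Nonempty ∧
    1 ≤ CL (↑C' : Set (Fin m → Bool)) ∧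
    x = (Supp (↑C' : Set (Fin m → Bool))).ncard / (CL (↑C' : Set (Fin m → Bool)) : ℝ)}

lemma hasChain_zero {m : ℕ} (C : Set (Fin m → Bool)) : HasChain C 0 :=
  ⟨Fin.elim0, Fin.elim0, fun i => i.elim0, fun i => i.elim0, fun i => i.elim0,
   fun i => i.elim0, fun i => i.elim0⟩

lemma hasChain_le {m ℓ : ℕ} {C : Set (Fin m → Bool)} (h : HasChain C ℓ) : ℓ ≤ m := by
  obtain ⟨a, -, ha, -⟩ := h
  simpa using Fintype.card_le_of_injective a ha

lemma bddAbove_chain {m : ℕ} (C : Set (Fin m → Bool)) : BddAbove {ℓ | HasChain C ℓ} :=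
  ⟨m, fun _ h => hasChain_le h⟩

lemma hasChain_CL {m : ℕ} (C : Set (Fin m → Bool)) : HasChain C (CL C) := by
  have h : CL C ∈ {ℓ | HasChain C ℓ} :=
    Nat.sSup_mem ⟨0, show (0:ℕ) ∈ {ℓ | HasChain C ℓ} from hasChain_zero C⟩ (bddAbove_chain C)
  exact h

lemma le_CL {m ℓ : ℕ} {C : Set (Fin m → Bool)} (h : HasChain C ℓ) : ℓ ≤ CL C :=
  le_csSup (bddAbove_chain C) h

lemma snoc_inj {n : ℕ} {α : Type*} {f : Fin n → α} {x : α} (hf : Function.Injective f)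
    (hx : ∀ i, f i ≠ x) : Function.Injective (Fin.snoc f x : Fin (n+1) → α) := by
  intro i j h
  induction i using Fin.lastCases with
  | last =>
    induction j using Fin.lastCases with
    | last => rfl
    | cast j =>
      rw [Fin.snoc_last, Fin.snoc_castSucc] at h
      exact absurd h.symm (hx j)
  | cast i =>
    induction j using Fin.lastCases with
    | last =>
      rw [Fin.snoc_last, Fin.snoc_castSucc] at h
      exact absurd h (hx i)
    | cast j =>
      rw [Fin.snoc_castSucc, Fin.snoc_castSucc] at h
      exact congrArg Fin.castSucc (hf h)

lemma hasChain_one {m : ℕ} {C : Set (Fin m → Bool)} {e : Fin m → Bool} {j : Fin m}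
    (heC : e ∈ C) (hej : e j = true) : HasChain C 1 :=
  ⟨fun _ => j, fun _ => e, fun x y _ => Subsingleton.elim x y,
   fun x y _ => Subsingleton.elim x y, fun _ => heC, fun _ => hej,
   fun i k hik => absurd (Subsingleton.elim i k) (ne_of_lt hik)⟩

lemma hasChain_extend {m ℓ : ℕ} {C P : Set (Fin m → Bool)} {j : Fin m} {e : Fin m → Bool}
    (hPC : P ⊆ C) (hP0 : ∀ c ∈ P, c j = false) (heC : e ∈ C) (hej : e j = true)
    (h : HasChain P ℓ) : HasChain C (ℓ + 1) := by
  obtain ⟨a, c, ha, hc, hmem, hdiag, hoff⟩ := h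
  have haj : ∀ i, a i ≠ j := by
    intro i hij
    have h1 := hdiag i
    rw [hij, hP0 _ (hmem i)] at h1
    exact Bool.false_ne_true h1
  have hce : ∀ i, c i ≠ e := by
    intro i hie
    have h1 := hP0 _ (hmem i)
    rw [hie, hej] at h1
    simp at h1
  refine ⟨Fin.snoc a j, Fin.snoc c e, snoc_inj ha haj, snoc_inj hc hce, ?_, ?_, ?_⟩
  · intro i
    induction i using Fin.lastCases with
    | last => rw [Fin.snoc_last]; exact heC
    | cast i => rw [Fin.snoc_castSucc]; exact hPC (hmem i)
  · intro i
    induction i using Fin.lastCases with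
    | last => rw [Fin.snoc_last, Fin.snoc_last]; exact hej
    | cast i => rw [Fin.snoc_castSucc, Fin.snoc_castSucc]; exact hdiag i
  · intro i k hik
    induction k using Fin.lastCases with
    | last =>
      induction i using Fin.lastCases with
      | last => exact absurd hik (lt_irrefl _)
      | cast i =>
        rw [Fin.snoc_castSucc, Fin.snoc_last]
        exact hP0 _ (hmem i)
    | cast k =>
      induction i using Fin.lastCases with
      | last => exact absurd hik (not_lt.2 (Fin.castSucc_lt_last k).le)
      | cast i =>
        have hlt : i < k := Fin.castSucc_lt_castSucc_iff.mp hik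
        rw [Fin.snoc_castSucc, Fin.snoc_castSucc]
        exact hoff i k hlt



/-- `|C| ≤ (m+1)^{CL(C)}`. -/
theorem card_le_pow_cl {m : ℕ} (C : Finset (Fin m → Bool)) :
    C.card ≤ (m + 1) ^ CL (↑C : Set (Fin m → Bool)) := by
  classical
  induction C using Finset.strongInduction with
  | _ C ih =>
  rcases C.eq_empty_or_nonempty with rfl | hCne
  · simp
  obtain ⟨e, heC, hmax⟩ : ∃ e ∈ C, ∀ x ∈ C, ¬ e < x := by
    obtain ⟨e, he⟩ := Finset.exists_maximal hCne
    exact ⟨e, he.1, fun x hx hlt => lt_irrefl e (lt_of_lt_of_le hlt (he.2 hx hlt.le))⟩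
  have key : ∀ c ∈ C.erase e, ∃ j, e j = true ∧ c j = false := by
    intro c hc
    rw [Finset.mem_erase] at hc
    by_contra hcon
    push_neg at hcon
    have hle : e ≤ c := by
      rw [Pi.le_def]
      intro j
      cases hej : e j with
      | false => simp
      | true =>
        have h1 := hcon j hej
        cases hcj : c j with
        | false => exact absurd hcj h1
        | true => exact le_refl _
    exact hmax c hc.2 (lt_of_le_of_ne hle (Ne.symm hc.1))
  rcases (C.erase e).eq_empty_or_nonempty with herase | ⟨c0, hc0⟩
  · have hCe : C = {e} := by
      rcases (Finset.erase_eq_empty_iff C e).1 herase with h | h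
      · exact absurd h hCne.ne_empty
      · exact h
    rw [hCe]
    simpa using Nat.one_le_pow _ _ (Nat.succ_pos m)
  obtain ⟨j0, hj0e, -⟩ := key c0 hc0
  set jf : (Fin m → Bool) → Fin m := fun c =>
    if h : ∃ j, e j = true ∧ c j = false then h.choose else j0 with hjf
  have hjf_spec : ∀ c ∈ C.erase e, e (jf c) = true ∧ c (jf c) = false := by
    intro c hc
    have h := key c hc
    simp only [hjf, dif_pos h]
    exact h.choose_spec
  set P : Fin m → Finset (Fin m → Bool) :=
    fun j => (C.erase e).filter (fun c => jf c = j) with hP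
  have hsub : C.erase e ⊆ Finset.univ.biUnion P := by
    intro c hc
    exact Finset.mem_biUnion.2 ⟨jf c, Finset.mem_univ _, Finset.mem_filter.2 ⟨hc, rfl⟩⟩
  have hCL1 : 1 ≤ CL (↑C : Set (Fin m → Bool)) :=
    le_CL (hasChain_one (Finset.mem_coe.2 heC) hj0e)
  obtain ⟨ℓ, hℓ⟩ : ∃ ℓ, CL (↑C : Set (Fin m → Bool)) = ℓ + 1 :=
    ⟨_, (Nat.succ_pred_eq_of_pos hCL1).symm⟩
  have hPbound : ∀ j, (P j).card ≤ (m + 1) ^ ℓ := by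
    intro j
    rcases (P j).eq_empty_or_nonempty with hPj | ⟨d, hd⟩
    · simp [hPj]
    have hPerase : P j ⊆ C.erase e := Finset.filter_subset _ _
    have hPss : P j ⊂ C := lt_of_le_of_lt hPerase (Finset.erase_ssubset heC)
    have hjtrue : e j = true := by
      have hd' := Finset.mem_filter.1 hd
      have h2 := (hjf_spec d hd'.1).1
      rwa [hd'.2] at h2
    have hPzero : ∀ c ∈ (↑(P j) : Set (Fin m → Bool)), c j = false := by
      intro c hc
      have hc' := Finset.mem_filter.1 (Finset.mem_coe.1 hc)
      have h2 := (hjf_spec c hc'.1).2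
      rwa [hc'.2] at h2
    have hext : HasChain (↑C : Set (Fin m → Bool)) (CL (↑(P j) : Set (Fin m → Bool)) + 1) := by
      refine hasChain_extend ?_ hPzero (Finset.mem_coe.2 heC) hjtrue (hasChain_CL _)
      intro x hx
      exact Finset.mem_coe.2 (Finset.mem_of_mem_erase (hPerase (Finset.mem_coe.1 hx)))
    have hCLP : CL (↑(P j) : Set (Fin m → Bool)) ≤ ℓ := by
      have h3 := le_CL hext
      omega
    calc (P j).card ≤ (m+1) ^ CL (↑(P j) : Set (Fin m → Bool)) := ih _ hPss
      _ ≤ (m+1) ^ ℓ := Nat.pow_le_pow_right (by omega) hCLP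
  have h1 : (C.erase e).card ≤ m * (m + 1) ^ ℓ := by
    calc (C.erase e).card ≤ (Finset.univ.biUnion P).card := Finset.card_le_card hsub
      _ ≤ ∑ j, (P j).card := Finset.card_biUnion_le
      _ ≤ ∑ _j : Fin m, (m+1)^ℓ := Finset.sum_le_sum (fun j _ => hPbound j)
      _ = m * (m+1)^ℓ := by simp [Finset.sum_const, Finset.card_univ, mul_comm]
  have h2 : C.card = (C.erase e).card + 1 := (Finset.card_erase_add_one heC).symm
  have h3 : 1 ≤ (m+1)^ℓ := Nat.one_le_pow _ _ (by omega)
  rw [hℓ, pow_succ]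
  nlinarith [h1, h2, h3]
end Paper
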